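/- Let H be a finite dimensional real Hilbert space (of dimension at least 2). Then the space L(L(H)) of continuous linear operators on L(H), where L(H) is the space of continuous linear operators on H with the operator norm, has no nonzero left symmetric point with respect to Birkhoff-James orthogonality. -/

import Mathlib

set_option linter.unusedSectionVars false
set_option maxHeartbeats 1000000

/-- Birkhoff-James orthogonality: `x ⊥_B y` iff `‖x + λ y‖ ≥ ‖x‖` for all real `λ`. -/
def BJOrth {X : Type*} [NormedAddCommGroup X] [NormedSpace ℝ X] (x y : X) : Prop :=
  ∀ l : ℝ, ‖x‖ ≤ ‖x + l • y‖

/-- `x` is a left symmetric point: `x ⊥_B y` implies `y ⊥_B x` for every `y`. -/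
def LeftSymPoint {X : Type*} [NormedAddCommGroup X] [NormedSpace ℝ X] (x : X) : Prop :=
  ∀ y : X, BJOrth x y → BJOrth y x

/- ### Auxiliary real-arithmetic lemmas -/

lemma aux_lam_exists (k r : ℝ) (hk : 0 < k) (hr : 0 < r) :
    ∃ lam : ℝ, 0 < lam ∧ 2*lam*k ≤ 1 ∧ lam*r^2 ≤ k/2 ∧ lam*(r^2+k^2) ≤ k := by
  refine ⟨k / (2*(r^2+k^2+1)), by positivity, ?_, ?_, ?_⟩
  · rw [mul_comm (2:ℝ) _, mul_assoc, div_mul_eq_mul_div, div_le_one (by positivity)]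
    nlinarith [sq_nonneg (k-1), sq_nonneg r]
  · rw [div_mul_eq_mul_div, div_le_div_iff₀ (by positivity) (by norm_num : (0:ℝ) < 2)]
    nlinarith [sq_nonneg r, sq_nonneg k, mul_pos hk hk]
  · rw [div_mul_eq_mul_div, div_le_iff₀ (by positivity)]
    nlinarith [sq_nonneg r, sq_nonneg k]

lemma aux_core1 (t nw nT k lam r : ℝ) (h2 : t^2 ≤ nw^2) (h3 : nT^2 ≤ r^2*nw^2)
    (hkpos : 0 < k) (hlampos : 0 < lam) (hlamk1 : 2*lam*k ≤ 1) (hlamr : lam*r^2 ≤ k/2) :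
    t^2 - 2*(lam*k*t^2) + lam^2*nT^2 ≤ (1 - lam*k/2)*nw^2 := by
  have hA : (0:ℝ) ≤ 1 - 2*lam*k := by linarith
  have s1 : t^2*(1-2*lam*k) ≤ nw^2*(1-2*lam*k) := mul_le_mul_of_nonneg_right h2 hA
  have s2 : lam^2*nT^2 ≤ lam^2*(r^2*nw^2) := mul_le_mul_of_nonneg_left h3 (sq_nonneg lam)
  have s3 : lam*r^2*(lam*nw^2) ≤ (k/2)*(lam*nw^2) :=
    mul_le_mul_of_nonneg_right hlamr (mul_nonneg hlampos.le (sq_nonneg nw))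
  nlinarith [s1, s2, s3, mul_pos hlampos hkpos, sq_nonneg nw]

lemma aux_core2 (t a e dz wn b zn k lam r : ℝ)
    (hr : 0 < r) (hk : 0 < k) (hlam : 0 < lam)
    (ht : t^2 ≤ b^2) (he : e^2 ≤ r^2*b^2*wn^2) (hdz2 : dz^2 ≤ r^2*b^2*zn^2)
    (hw : wn^2 = zn^2 - a^2) (hb2 : b^2*a^2 ≤ b^2*zn^2)
    (hlamk1 : 2*lam*k ≤ 1) (hlamr : lam*r^2 ≤ k/2) (hlamrk : lam*(r^2+k^2) ≤ k) :
    t^2*a^2 - 2*lam*k*(t^2*a^2) - 2*lam*(t*a)*e + lam^2*dz^2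
      ≤ (1-lam*k/2)*(b^2*zn^2) := by
  have hcoef1 : (0:ℝ) ≤ k - lam*k^2 := by nlinarith
  have hcoef2 : (0:ℝ) ≤ k - lam*k^2 - lam*r^2 := by nlinarith
  apply le_of_mul_le_mul_left _ hk
  have s0 : -(2*k*(t*a)*e) ≤ k^2*(t*a)^2 + e^2 := by nlinarith [sq_nonneg (k*(t*a)+e)]
  have m1 : lam*(-(2*k*(t*a)*e)) ≤ lam*(k^2*(t*a)^2 + e^2) :=
    mul_le_mul_of_nonneg_left s0 hlam.le
  have m2 : lam*e^2 ≤ lam*(r^2*b^2*wn^2) := mul_le_mul_of_nonneg_left he hlam.le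
  have m3 : lam^2*k*dz^2 ≤ lam^2*k*(r^2*b^2*zn^2) := by
    apply mul_le_mul_of_nonneg_left hdz2; positivity
  have m4 : (k - lam*k^2)*(t^2*a^2) ≤ (k - lam*k^2)*(b^2*a^2) :=
    mul_le_mul_of_nonneg_left (by nlinarith [sq_nonneg a] : t^2*a^2 ≤ b^2*a^2) hcoef1
  have m5 : (k - lam*k^2 - lam*r^2)*(b^2*a^2) ≤ (k - lam*k^2 - lam*r^2)*(b^2*zn^2) :=
    mul_le_mul_of_nonneg_left hb2 hcoef2
  have m6 : lam^2*k*r^2 ≤ lam*k^2/2 := by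
    nlinarith [mul_le_mul_of_nonneg_left hlamr (mul_pos hlam hk).le]
  have m6' : (lam^2*k*r^2)*(b^2*zn^2) ≤ (lam*k^2/2)*(b^2*zn^2) := by
    apply mul_le_mul_of_nonneg_right m6; positivity
  have m2' : lam*(r^2*b^2*wn^2) = lam*(r^2*b^2*zn^2) - lam*(r^2*b^2*a^2) := by
    rw [hw]; ring
  rw [m2'] at m2
  nlinarith [m1, m2, m3, m4, m5, m6']

/- ### General normed space facts -/

lemma aux_norm_attain {E F : Type*} [NormedAddCommGroup E] [NormedSpace ℝ E]
    [FiniteDimensional ℝ E] [Nontrivial E] [NormedAddCommGroup F] [NormedSpace ℝ F]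
    (T : E →L[ℝ] F) : ∃ x : E, ‖x‖ = 1 ∧ ‖T x‖ = ‖T‖ := by
  obtain ⟨x₀, hx₀, hmax⟩ := (isCompact_sphere (0 : E) 1).exists_isMaxOn
    (NormedSpace.sphere_nonempty.2 zero_le_one)
    (Continuous.continuousOn (by continuity : Continuous fun x : E => ‖T x‖))
  have hx₀n : ‖x₀‖ = 1 := by simpa using mem_sphere_zero_iff_norm.1 hx₀
  refine ⟨x₀, hx₀n, le_antisymm (by simpa [hx₀n] using T.le_opNorm x₀) ?_⟩
  refine T.opNorm_le_bound (norm_nonneg _) fun x => ?_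
  rcases eq_or_ne x 0 with rfl | hx
  · simp
  · have hxs : ‖x‖⁻¹ • x ∈ Metric.sphere (0 : E) 1 := by
      simp [norm_smul, abs_of_nonneg, inv_mul_cancel₀ (norm_ne_zero_iff.2 hx)]
    have h1 := hmax hxs
    simp only [Set.mem_setOf_eq, map_smul, norm_smul, norm_inv, norm_norm] at h1
    have hxpos : (0:ℝ) < ‖x‖ := norm_pos_iff.2 hx
    calc ‖T x‖ = ‖x‖ * (‖x‖⁻¹ * ‖T x‖) := by field_simp
    _ ≤ ‖x‖ * ‖T x₀‖ := by
        apply mul_le_mul_of_nonneg_left _ (norm_nonneg x)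
        simpa using h1
    _ = ‖T x₀‖ * ‖x‖ := mul_comm _ _

/- ### Inner product space facts -/

section InnerFacts

variable {H : Type*} [NormedAddCommGroup H] [InnerProductSpace ℝ H] [FiniteDimensional ℝ H]

lemma aux_exists_unit_orth (hdim : 2 ≤ Module.finrank ℝ H) (p : H) :
    ∃ q : H, ‖q‖ = 1 ∧ (inner ℝ p q : ℝ) = 0 := by
  have : Nontrivial H := Module.nontrivial_of_finrank_pos (R := ℝ) (by omega)
  rcases eq_or_ne p 0 with rfl | hp
  · obtain ⟨q, hq⟩ := exists_norm_eq H zero_le_one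
    exact ⟨q, hq, inner_zero_left q⟩
  · have h1 : Module.finrank ℝ (Submodule.span ℝ {p}) = 1 := finrank_span_singleton hp
    have h2 := Submodule.finrank_add_finrank_orthogonal (K := Submodule.span ℝ {p}) (𝕜 := ℝ)
    have hpos : 0 < Module.finrank ℝ (Submodule.span ℝ {p})ᗮ := by omega
    have : Nontrivial ((Submodule.span ℝ {p})ᗮ) :=
      Module.nontrivial_of_finrank_pos (R := ℝ) hpos
    obtain ⟨⟨q', hq'mem⟩, hq'ne⟩ := exists_ne (0 : (Submodule.span ℝ {p})ᗮ)
    have hq'0 : q' ≠ 0 := by simpa [Submodule.mk_eq_zero] using hq'ne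
    refine ⟨‖q'‖⁻¹ • q', ?_, ?_⟩
    · simp [norm_smul, abs_of_nonneg, inv_mul_cancel₀ (norm_ne_zero_iff.2 hq'0)]
    · have h3 := Submodule.mem_orthogonal_singleton_iff_inner_right.1 hq'mem
      rw [real_inner_smul_right]
      simp [h3]

lemma aux_bessel2 (u d z : H) (hu : ‖u‖ = 1) (hd : ‖d‖ = 1) (hud : (inner ℝ u d : ℝ) = 0) :
    (inner ℝ u z : ℝ)^2 + (inner ℝ d z : ℝ)^2 ≤ ‖z‖^2 := by
  have h0 : (0:ℝ) ≤ ‖z - (inner ℝ u z : ℝ) • u - (inner ℝ d z : ℝ) • d‖^2 := sq_nonneg _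
  have hu2 : (inner ℝ u u : ℝ) = 1 := by
    rw [real_inner_self_eq_norm_sq, hu]; norm_num
  have hd2 : (inner ℝ d d : ℝ) = 1 := by
    rw [real_inner_self_eq_norm_sq, hd]; norm_num
  have hdu : (inner ℝ d u : ℝ) = 0 := by rw [real_inner_comm]; exact hud
  have hexp : ‖z - (inner ℝ u z : ℝ) • u - (inner ℝ d z : ℝ) • d‖^2
      = ‖z‖^2 - (inner ℝ u z : ℝ)^2 - (inner ℝ d z : ℝ)^2 := by
    rw [← real_inner_self_eq_norm_sq, ← real_inner_self_eq_norm_sq]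
    simp only [inner_sub_left, inner_sub_right, real_inner_smul_left, real_inner_smul_right,
      hu2, hd2, hud, hdu]
    ring_nf
    rw [real_inner_comm z u, real_inner_comm z d]
    ring
  nlinarith [h0, hexp]

lemma aux_span_scalar (S V : H →L[ℝ] H) (hV : V ≠ 0) (h : ∀ x : H, ∃ c : ℝ, S x = c • V x) :
    ∃ c : ℝ, ∀ x : H, S x = c • V x := by
  have hker : ∀ x : H, V x = 0 → S x = 0 := by
    intro x hx
    obtain ⟨c, hc⟩ := h x
    simpa [hx] using hc
  obtain ⟨x₀, hx₀⟩ : ∃ x₀ : H, V x₀ ≠ 0 := by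
    by_contra hall
    push_neg at hall
    exact hV (by ext x; simp [hall x])
  obtain ⟨c, hc⟩ := h x₀
  refine ⟨c, fun x => ?_⟩
  rcases eq_or_ne (V x) 0 with hVx | hVx
  · rw [hker x hVx, hVx, smul_zero]
  obtain ⟨d, hd⟩ := h x
  suffices hdc : d = c by rw [hd, hdc]
  by_cases hdep : ∃ t : ℝ, V x₀ = t • V x
  · obtain ⟨t, ht⟩ := hdep
    have htne : t ≠ 0 := fun h0 => hx₀ (by rw [ht, h0, zero_smul])
    have hkv : V (x₀ - t • x) = 0 := by simp [ht]
    have hks : S x₀ = t • S x := by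
      have h2 := hker _ hkv
      simp only [map_sub, map_smul, sub_eq_zero] at h2
      exact h2
    rw [hc, hd, ht, smul_smul, smul_smul] at hks
    have h3 : c * t = t * d := smul_left_injective ℝ hVx hks
    exact mul_left_cancel₀ htne (by linear_combination -h3)
  · push_neg at hdep
    obtain ⟨e, he⟩ := h (x + x₀)
    have hsum : d • V x + c • V x₀ = e • V x + e • V x₀ := by
      have h4 := he
      rw [map_add, map_add, hd, hc, smul_add] at h4
      exact h4
    have hce : c = e := by
      by_contra hne
      apply hdep ((e - d) / (c - e))
      have h5 : (c - e) • V x₀ = (e - d) • V x := by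
        rw [sub_smul, sub_smul]
        linear_combination (norm := module) hsum
      have hcne : c - e ≠ 0 := sub_ne_zero.2 hne
      rw [div_eq_inv_mul, mul_smul, ← h5, inv_smul_smul₀ hcne]
    subst hce
    have h6 : d • V x = c • V x := by
      have h7 := hsum
      rwa [add_left_inj] at h7
    exact smul_left_injective ℝ hVx h6

lemma clm_norm_smul {E F : Type*} [NormedAddCommGroup E] [NormedSpace ℝ E]
    [NormedAddCommGroup F] [NormedSpace ℝ F] (c : ℝ) (g : E →L[ℝ] F) :
    ‖c • g‖ = ‖c‖ * ‖g‖ := by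
  rcases eq_or_ne c 0 with rfl | hc
  · simp
  · apply le_antisymm (ContinuousLinearMap.opNorm_smul_le c g)
    have h1 := ContinuousLinearMap.opNorm_smul_le c⁻¹ (c • g)
    rw [inv_smul_smul₀ hc, norm_inv] at h1
    have hcpos : 0 < ‖c‖ := norm_pos_iff.2 hc
    calc ‖c‖ * ‖g‖ ≤ ‖c‖ * (‖c‖⁻¹ * ‖c • g‖) := by
          exact mul_le_mul_of_nonneg_left h1 hcpos.le
    _ = ‖c • g‖ := by field_simp


/- ### The Ghosh–Sain–Paul theorem for L(H) -/

lemma aux_gsp_good (T : H →L[ℝ] H) (hT : T ≠ 0)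
    (x₁ : H) (hx₁ : ‖x₁‖ = 1) (hTx₁ : ‖T x₁‖ = ‖T‖)
    (y : H) (hy : ‖y‖ = 1) (hvy : (inner ℝ (T x₁) y : ℝ) = 0)
    (z : H) (hz : (inner ℝ (T z) y : ℝ) ≠ 0) (hsym : LeftSymPoint T) : False := by
  set r : ℝ := ‖T‖ with hr
  have hrpos : 0 < r := norm_pos_iff.2 hT
  set ψ : H →L[ℝ] ℝ := (innerSL ℝ y).comp T with hψdef
  have hψ : ψ ≠ 0 := by
    intro h0
    apply hz
    rw [real_inner_comm]
    show ψ z = 0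
    rw [h0]; rfl
  set k : ℝ := ‖ψ‖ with hk
  have hkpos : 0 < k := norm_pos_iff.2 hψ
  set f : H →L[ℝ] ℝ := k⁻¹ • ψ with hfdef
  have hψf : ∀ w, ψ w = k * f w := by
    intro w
    rw [hfdef]
    show ψ w = k * (k⁻¹ * ψ w)
    field_simp
  have hf : ‖f‖ = 1 := by
    rw [hfdef, norm_smul (β := H →L[ℝ] ℝ), norm_inv, Real.norm_eq_abs, abs_of_pos hkpos]
    exact inv_mul_cancel₀ (ne_of_gt hkpos)
  set A : H →L[ℝ] H := f.smulRight y with hAdef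
  have hA : ‖A‖ = 1 := by
    rw [hAdef, ContinuousLinearMap.norm_smulRight_apply, hf, hy, one_mul]
  have hfx₁ : f x₁ = 0 := by
    have h1 : ψ x₁ = 0 := by
      show (inner ℝ y (T x₁) : ℝ) = 0
      rw [real_inner_comm]; exact hvy
    rw [hfdef]
    show k⁻¹ * ψ x₁ = 0
    rw [h1, mul_zero]
  have hTA : BJOrth T A := by
    intro l
    have h1 : (T + l • A) x₁ = T x₁ := by
      simp [hAdef, hfx₁]
    calc ‖T‖ = ‖(T + l • A) x₁‖ := by rw [h1, hTx₁]
    _ ≤ ‖T + l • A‖ * ‖x₁‖ := ContinuousLinearMap.le_opNorm _ _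
    _ = ‖T + l • A‖ := by rw [hx₁, mul_one]
  have hAT := hsym A hTA
  obtain ⟨lam, hlampos, hlamk1, hlamr, _⟩ := aux_lam_exists k r hkpos hrpos
  have hlamk : 0 < lam * k := mul_pos hlampos hkpos
  have hkey : ‖A + (-lam) • T‖ ≤ Real.sqrt (1 - lam * k / 2) := by
    apply ContinuousLinearMap.opNorm_le_bound _ (Real.sqrt_nonneg _)
    intro w
    have happ : (A + (-lam) • T) w = (f w) • y - lam • (T w) := by
      simp [hAdef, sub_eq_add_neg, neg_smul]
    have hsq : ‖(f w) • y - lam • (T w)‖^2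
        = (f w)^2 - 2 * (lam * k * (f w)^2) + lam^2 * ‖T w‖^2 := by
      rw [norm_sub_sq_real, real_inner_smul_left, real_inner_smul_right]
      have h5 : (inner ℝ y (T w) : ℝ) = ψ w := rfl
      rw [h5, hψf w, norm_smul, norm_smul, hy, Real.norm_eq_abs, Real.norm_eq_abs,
        mul_one, mul_pow, sq_abs, sq_abs]
      ring
    have hfw : |f w| ≤ ‖w‖ := by
      have h6 := f.le_opNorm w
      rwa [hf, one_mul, Real.norm_eq_abs] at h6
    have hTw : ‖T w‖ ≤ r * ‖w‖ := T.le_opNorm w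
    have hbound : ‖(f w) • y - lam • (T w)‖^2 ≤ (1 - lam * k / 2) * ‖w‖^2 := by
      rw [hsq]
      have h2 : (f w)^2 ≤ ‖w‖^2 := by
        rw [← sq_abs (f w)]
        exact pow_le_pow_left₀ (abs_nonneg _) hfw 2
      have h3 : ‖T w‖^2 ≤ r^2 * ‖w‖^2 := by
        rw [← mul_pow]
        exact pow_le_pow_left₀ (norm_nonneg _) hTw 2
      exact aux_core1 (f w) ‖w‖ ‖T w‖ k lam r h2 h3 hkpos hlampos hlamk1 hlamr
    rw [happ]
    calc ‖(f w) • y - lam • (T w)‖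
        = Real.sqrt (‖(f w) • y - lam • (T w)‖^2) := by
          rw [Real.sqrt_sq (norm_nonneg _)]
    _ ≤ Real.sqrt ((1 - lam * k / 2) * ‖w‖^2) := Real.sqrt_le_sqrt hbound
    _ = Real.sqrt (1 - lam * k / 2) * ‖w‖ := by
          rw [Real.sqrt_mul' _ (sq_nonneg _)]
          rw [Real.sqrt_sq (norm_nonneg _)]
  have hlt : Real.sqrt (1 - lam * k / 2) < 1 := by
    have h7 : 1 - lam * k / 2 < 1 := by linarith
    calc Real.sqrt (1 - lam * k / 2) < Real.sqrt 1 := by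
          apply Real.sqrt_lt_sqrt _ h7
          linarith
    _ = 1 := Real.sqrt_one
  have h8 := hAT (-lam)
  rw [hA] at h8
  linarith [le_trans h8 hkey]

lemma aux_gsp_bad (hdim : 2 ≤ Module.finrank ℝ H) (T : H →L[ℝ] H)
    (u : H) (hu : ‖u‖ = 1) (v : H) (hv : v ≠ 0)
    (hform : ∀ z : H, T z = (inner ℝ u z : ℝ) • v) (hsym : LeftSymPoint T) : False := by
  set r : ℝ := ‖v‖ with hrdef
  have hrpos : 0 < r := norm_pos_iff.2 hv
  have huu : (inner ℝ u u : ℝ) = 1 := by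
    rw [real_inner_self_eq_norm_sq, hu]; norm_num
  have hTu : T u = v := by rw [hform, huu, one_smul]
  have hTnorm : ‖T‖ = r := by
    apply le_antisymm
    · apply ContinuousLinearMap.opNorm_le_bound _ hrpos.le
      intro z
      rw [hform, norm_smul, Real.norm_eq_abs]
      rw [mul_comm]
      apply mul_le_mul_of_nonneg_left _ hrpos.le
      calc |(inner ℝ u z : ℝ)| ≤ ‖u‖ * ‖z‖ := abs_real_inner_le_norm u z
      _ = ‖z‖ := by rw [hu, one_mul]
    · calc r = ‖T u‖ := by rw [hTu]
      _ ≤ ‖T‖ * ‖u‖ := T.le_opNorm u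
      _ = ‖T‖ := by rw [hu, mul_one]
  set f2 : H := r⁻¹ • v with hf2def
  have hf2 : ‖f2‖ = 1 := by
    rw [hf2def, norm_smul, norm_inv, Real.norm_eq_abs, abs_of_pos hrpos]
    exact inv_mul_cancel₀ (ne_of_gt hrpos)
  have hvf2 : (inner ℝ v f2 : ℝ) = r := by
    rw [hf2def, real_inner_smul_right, real_inner_self_eq_norm_sq]
    field_simp [hrdef]
    ring
  obtain ⟨f1, hf1, hvf1⟩ := aux_exists_unit_orth hdim v
  obtain ⟨d, hd, hud⟩ := aux_exists_unit_orth hdim u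
  have hf12 : (inner ℝ f1 f2 : ℝ) = 0 := by
    rw [hf2def, real_inner_smul_right, real_inner_comm, hvf1, mul_zero]
  have hdu : (inner ℝ d u : ℝ) = 0 := by rw [real_inner_comm]; exact hud
  set A : H →L[ℝ] H := (innerSL ℝ u).smulRight f1 + (innerSL ℝ d).smulRight (f1 + f2)
    with hAdef
  have hAz : ∀ z : H, A z = (inner ℝ u z : ℝ) • f1 + (inner ℝ d z : ℝ) • (f1 + f2) := by
    intro z; rfl
  have hTA : BJOrth T A := by
    intro l
    have h1 : (T + l • A) u = v + l • f1 := by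
      have h0 : A u = f1 := by
        rw [hAz, huu, hdu, one_smul, zero_smul, add_zero]
      simp [h0, hTu]
    have h2 : (inner ℝ (v + l • f1) f2 : ℝ) = r := by
      rw [inner_add_left, real_inner_smul_left, hf12, hvf2, mul_zero, add_zero]
    calc ‖T‖ = r := hTnorm
    _ = (inner ℝ (v + l • f1) f2 : ℝ) := h2.symm
    _ ≤ ‖v + l • f1‖ * ‖f2‖ := real_inner_le_norm _ _
    _ = ‖(T + l • A) u‖ := by rw [hf2, mul_one, h1]
    _ ≤ ‖T + l • A‖ * ‖u‖ := ContinuousLinearMap.le_opNorm _ _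
    _ = ‖T + l • A‖ := by rw [hu, mul_one]
  have hAT := hsym A hTA
  have hf1f2sub : ‖f1 - f2‖^2 = 2 := by
    rw [norm_sub_sq_real, hf12, hf1, hf2]; norm_num
  have hf1f2add : ‖f1 + f2‖^2 = 2 := by
    rw [norm_add_sq_real, hf12, hf1, hf2]; norm_num
  have hcross : (inner ℝ (f1 - f2) (f1 + f2) : ℝ) = 0 := by
    rw [inner_sub_left, inner_add_right, inner_add_right]
    have e1 : (inner ℝ f1 f1 : ℝ) = 1 := by
      rw [real_inner_self_eq_norm_sq, hf1]; norm_num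
    have e2 : (inner ℝ f2 f2 : ℝ) = 1 := by
      rw [real_inner_self_eq_norm_sq, hf2]; norm_num
    have e3 : (inner ℝ f2 f1 : ℝ) = 0 := by rw [real_inner_comm]; exact hf12
    rw [e1, e2, e3, hf12]; ring
  have hup : ‖A + (-r⁻¹) • T‖ ≤ Real.sqrt 2 := by
    apply ContinuousLinearMap.opNorm_le_bound _ (Real.sqrt_nonneg _)
    intro z
    have happ : (A + (-r⁻¹) • T) z
        = (inner ℝ u z : ℝ) • (f1 - f2) + (inner ℝ d z : ℝ) • (f1 + f2) := by
      have h3 : (A + (-r⁻¹) • T) z = A z + (-r⁻¹) • T z := rfl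
      rw [h3, hAz, hform, hf2def]
      module
    rw [happ]
    have hsq : ‖(inner ℝ u z : ℝ) • (f1 - f2) + (inner ℝ d z : ℝ) • (f1 + f2)‖^2
        = 2 * ((inner ℝ u z : ℝ)^2 + (inner ℝ d z : ℝ)^2) := by
      rw [norm_add_sq_real, norm_smul, norm_smul, real_inner_smul_left, real_inner_smul_right,
        hcross, Real.norm_eq_abs, Real.norm_eq_abs, mul_pow, mul_pow, sq_abs, sq_abs,
        hf1f2sub, hf1f2add]
      ring
    have hb := aux_bessel2 u d z hu hd hud
    calc ‖(inner ℝ u z : ℝ) • (f1 - f2) + (inner ℝ d z : ℝ) • (f1 + f2)‖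
        = Real.sqrt (2 * ((inner ℝ u z : ℝ)^2 + (inner ℝ d z : ℝ)^2)) := by
          rw [← hsq, Real.sqrt_sq (norm_nonneg _)]
    _ ≤ Real.sqrt (2 * ‖z‖^2) := by
          apply Real.sqrt_le_sqrt; linarith
    _ = Real.sqrt 2 * ‖z‖ := by
          rw [Real.sqrt_mul (by norm_num : (0:ℝ) ≤ 2), Real.sqrt_sq (norm_nonneg _)]
  have hArlow : Real.sqrt 5 ≤ ‖A‖ * Real.sqrt 2 := by
    have hAud : A (u + d) = (2:ℝ) • f1 + f2 := by
      rw [hAz, inner_add_right, inner_add_right, huu, hud, hdu]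
      have e2 : (inner ℝ d d : ℝ) = 1 := by
        rw [real_inner_self_eq_norm_sq, hd]; norm_num
      rw [e2]
      module
    have h5 : ‖(2:ℝ) • f1 + f2‖^2 = 5 := by
      rw [norm_add_sq_real, real_inner_smul_left, hf12, norm_smul, Real.norm_eq_abs,
        mul_pow, sq_abs, hf1, hf2]
      norm_num
    have hud2 : ‖u + d‖^2 = 2 := by
      rw [norm_add_sq_real, hud, hu, hd]; norm_num
    have h6 : ‖A (u + d)‖ = Real.sqrt 5 := by
      rw [hAud, ← h5, Real.sqrt_sq (norm_nonneg _)]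
    have h7 : ‖u + d‖ = Real.sqrt 2 := by
      rw [← hud2, Real.sqrt_sq (norm_nonneg _)]
    calc Real.sqrt 5 = ‖A (u + d)‖ := h6.symm
    _ ≤ ‖A‖ * ‖u + d‖ := A.le_opNorm _
    _ = ‖A‖ * Real.sqrt 2 := by rw [h7]
  have hAle : ‖A‖ ≤ Real.sqrt 2 := le_trans (hAT (-r⁻¹)) hup
  have h8 : Real.sqrt 5 ≤ 2 := by
    calc Real.sqrt 5 ≤ Real.sqrt 2 * Real.sqrt 2 :=
      le_trans hArlow (mul_le_mul_of_nonneg_right hAle (Real.sqrt_nonneg _))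
    _ = 2 := Real.mul_self_sqrt (by norm_num)
  have h9 : (2:ℝ) < Real.sqrt 5 := by
    have h10 : Real.sqrt 4 < Real.sqrt 5 := Real.sqrt_lt_sqrt (by norm_num) (by norm_num)
    calc (2:ℝ) = Real.sqrt 4 := by
          rw [show (4:ℝ) = 2^2 by norm_num, Real.sqrt_sq (by norm_num : (0:ℝ) ≤ 2)]
    _ < Real.sqrt 5 := h10
  linarith

lemma aux_gsp (hdim : 2 ≤ Module.finrank ℝ H) (T : H →L[ℝ] H) (hsym : LeftSymPoint T) :
    T = 0 := by
  by_contra hT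
  have hnt : Nontrivial H := Module.nontrivial_of_finrank_pos (R := ℝ) (by omega)
  obtain ⟨x₁, hx₁, hTx₁⟩ := aux_norm_attain T
  by_cases hgood : ∃ y : H, ‖y‖ = 1 ∧ (inner ℝ (T x₁) y : ℝ) = 0 ∧ ∃ z, (inner ℝ (T z) y : ℝ) ≠ 0
  · obtain ⟨y, hy, hvy, z, hz⟩ := hgood
    exact aux_gsp_good T hT x₁ hx₁ hTx₁ y hy hvy z hz hsym
  · push_neg at hgood
    set v : H := T x₁ with hvdef
    have hv : v ≠ 0 := by
      intro h0
      apply hT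
      have h1 : ‖T‖ = 0 := by rw [← hTx₁, h0, norm_zero]
      exact norm_eq_zero.1 h1
    have hspan : ∀ z : H, T z ∈ Submodule.span ℝ {v} := by
      intro z
      rw [← Submodule.orthogonal_orthogonal (Submodule.span ℝ {v})]
      rw [Submodule.mem_orthogonal]
      intro w hw
      have hvw : (inner ℝ v w : ℝ) = 0 :=
        Submodule.mem_orthogonal_singleton_iff_inner_right.1 hw
      rcases eq_or_ne w 0 with rfl | hw0
      · exact inner_zero_left _
      · have hwu : ‖(‖w‖⁻¹ • w)‖ = 1 := by
          rw [norm_smul, norm_inv, norm_norm]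
          exact inv_mul_cancel₀ (norm_ne_zero_iff.2 hw0)
        have hvwu : (inner ℝ v (‖w‖⁻¹ • w) : ℝ) = 0 := by
          rw [real_inner_smul_right, hvw, mul_zero]
        have h1 := hgood (‖w‖⁻¹ • w) hwu hvwu z
        rw [real_inner_smul_right] at h1
        have hwn : (‖w‖:ℝ)⁻¹ ≠ 0 := inv_ne_zero (norm_ne_zero_iff.2 hw0)
        have h2 : (inner ℝ (T z) w : ℝ) = 0 := by
          rcases mul_eq_zero.1 h1 with h | h
          · exact absurd h hwn
          · exact h
        rw [real_inner_comm]; exact h2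
    set γ : H →L[ℝ] ℝ := (‖v‖^2)⁻¹ • ((innerSL ℝ v).comp T) with hγdef
    have hγ : ∀ z : H, T z = γ z • v := by
      intro z
      obtain ⟨a, ha⟩ := Submodule.mem_span_singleton.1 (hspan z)
      have h3 : γ z = a := by
        have h4 : γ z = (‖v‖^2)⁻¹ * (inner ℝ v (T z) : ℝ) := rfl
        rw [h4, ← ha, real_inner_smul_right, real_inner_self_eq_norm_sq]
        have hvne : ‖v‖^2 ≠ 0 := pow_ne_zero _ (norm_ne_zero_iff.2 hv)
        field_simp
      rw [h3, ha]
    have hTsm : T = γ.smulRight v := by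
      ext z; rw [hγ z]; rfl
    have hγn : ‖γ‖ = 1 := by
      have h5 : ‖T‖ = ‖γ‖ * ‖v‖ := by
        rw [hTsm, ContinuousLinearMap.norm_smulRight_apply]
      have h7 : (0:ℝ) < ‖v‖ := norm_pos_iff.2 hv
      have h8 : ‖γ‖ * ‖v‖ = 1 * ‖v‖ := by rw [← h5, ← hTx₁, one_mul]
      exact mul_right_cancel₀ (ne_of_gt h7) h8
    set u : H := (InnerProductSpace.toDual ℝ H).symm γ with hudef
    have huγ : ∀ z : H, (inner ℝ u z : ℝ) = γ z := fun z =>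
      InnerProductSpace.toDual_symm_apply
    have hun : ‖u‖ = 1 := by
      rw [hudef, LinearIsometryEquiv.norm_map]
      exact hγn
    have hform : ∀ z : H, T z = (inner ℝ u z : ℝ) • v := by
      intro z; rw [huγ z]; exact hγ z
    exact aux_gsp_bad hdim T u hun v hv hform hsym


lemma aux_top_pointwise (x y : H) (hx : ‖x‖ = 1) (hy : ‖y‖ = 1)
    (D : H →L[ℝ] H) (t k lam r nb : ℝ)
    (hDn : ‖D‖ ≤ r * nb) (hDx : (inner ℝ y (D x) : ℝ) = k * t) (ht : |t| ≤ nb)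
    (hrpos : 0 < r) (hkpos : 0 < k) (hlampos : 0 < lam)
    (hlamk1 : 2*lam*k ≤ 1) (hlamr : lam*r^2 ≤ k/2) (hlamrk : lam*(r^2+k^2) ≤ k)
    (z : H) :
    ‖(t * (inner ℝ x z : ℝ)) • y - lam • (D z)‖ ≤ (nb * Real.sqrt (1 - lam*k/2)) * ‖z‖ := by
  have hnb : 0 ≤ nb := le_trans (abs_nonneg t) ht
  set a : ℝ := (inner ℝ x z : ℝ) with hadef
  set w : H := z - a • x with hwdef
  have hxw : (inner ℝ x w : ℝ) = 0 := by
    rw [hwdef, inner_sub_right, real_inner_smul_right, real_inner_self_eq_norm_sq, hx]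
    norm_num
    rw [hadef]; ring
  have hzw : z = a • x + w := by rw [hwdef]; abel
  have hwn2 : ‖w‖^2 = ‖z‖^2 - a^2 := by
    rw [hwdef, norm_sub_sq_real, real_inner_smul_right, norm_smul, Real.norm_eq_abs,
      mul_pow, sq_abs, hx]
    have h1 : (inner ℝ z x : ℝ) = a := by rw [real_inner_comm]
    rw [h1]
    ring
  have ha2 : a^2 ≤ ‖z‖^2 := by nlinarith [sq_nonneg ‖w‖]
  set e : ℝ := (inner ℝ y (D w) : ℝ) with hedef
  have hDzn : ‖D z‖ ≤ r * nb * ‖z‖ :=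
    le_trans (D.le_opNorm z) (mul_le_mul_of_nonneg_right hDn (norm_nonneg z))
  have hDwn : ‖D w‖ ≤ r * nb * ‖w‖ :=
    le_trans (D.le_opNorm w) (mul_le_mul_of_nonneg_right hDn (norm_nonneg w))
  have he : |e| ≤ r * nb * ‖w‖ := by
    calc |e| ≤ ‖y‖ * ‖D w‖ := abs_real_inner_le_norm y (D w)
    _ = ‖D w‖ := by rw [hy, one_mul]
    _ ≤ r * nb * ‖w‖ := hDwn
  have hinner : (inner ℝ y (D z) : ℝ) = a * (k * t) + e := by
    conv_lhs => rw [hzw]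
    rw [map_add, map_smul, inner_add_right, real_inner_smul_right, hDx]
  have hsq : ‖(t * a) • y - lam • (D z)‖^2
      = t^2*a^2 - 2*lam*k*(t^2*a^2) - 2*lam*(t*a)*e + lam^2*‖D z‖^2 := by
    have e1 : ‖(t*a) • y‖^2 = t^2*a^2 := by
      rw [norm_smul, Real.norm_eq_abs, hy, mul_one, sq_abs]; ring
    have e2 : ‖lam • (D z)‖^2 = lam^2*‖D z‖^2 := by
      rw [norm_smul, Real.norm_eq_abs, mul_pow, sq_abs]
    rw [norm_sub_sq_real, e1, e2, real_inner_smul_left, real_inner_smul_right, hinner]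
    ring
  have hbound : ‖(t * a) • y - lam • (D z)‖^2 ≤ (1 - lam*k/2) * (nb^2 * ‖z‖^2) := by
    rw [hsq]
    apply aux_core2 t a e ‖D z‖ ‖w‖ nb ‖z‖ k lam r hrpos hkpos hlampos
    · rw [← sq_abs t]; exact pow_le_pow_left₀ (abs_nonneg _) ht 2
    · have h7 : e^2 ≤ (r * nb * ‖w‖)^2 := by
        rw [← sq_abs e]; exact pow_le_pow_left₀ (abs_nonneg _) he 2
      calc e^2 ≤ (r * nb * ‖w‖)^2 := h7
      _ = r^2 * nb^2 * ‖w‖^2 := by ring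
    · have h8 : ‖D z‖^2 ≤ (r * nb * ‖z‖)^2 := pow_le_pow_left₀ (norm_nonneg _) hDzn 2
      calc ‖D z‖^2 ≤ (r * nb * ‖z‖)^2 := h8
      _ = r^2 * nb^2 * ‖z‖^2 := by ring
    · exact hwn2
    · exact mul_le_mul_of_nonneg_left ha2 (sq_nonneg nb)
    · exact hlamk1
    · exact hlamr
    · exact hlamrk
  calc ‖(t * a) • y - lam • (D z)‖
      = Real.sqrt (‖(t * a) • y - lam • (D z)‖^2) := by
        rw [Real.sqrt_sq (norm_nonneg _)]
  _ ≤ Real.sqrt ((1 - lam*k/2) * (nb^2 * ‖z‖^2)) := Real.sqrt_le_sqrt hbound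
  _ = Real.sqrt (1 - lam*k/2) * (nb * ‖z‖) := by
        rw [Real.sqrt_mul (by nlinarith : (0:ℝ) ≤ 1 - lam*k/2)]
        congr 1
        rw [show nb^2 * ‖z‖^2 = (nb*‖z‖)^2 by ring,
          Real.sqrt_sq (by positivity)]
  _ = (nb * Real.sqrt (1 - lam*k/2)) * ‖z‖ := by ring

lemma aux_top_good (𝒯 : (H →L[ℝ] H) →L[ℝ] (H →L[ℝ] H)) (h𝒯 : 𝒯 ≠ 0)
    (A₁ : H →L[ℝ] H) (hA₁ : ‖A₁‖ = 1) (h𝒯A₁ : ‖𝒯 A₁‖ = ‖𝒯‖)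
    (x y : H) (hx : ‖x‖ = 1) (hy : ‖y‖ = 1)
    (hxy : (inner ℝ (𝒯 A₁ x) y : ℝ) = 0)
    (B₀ : H →L[ℝ] H) (hB₀ : (inner ℝ (𝒯 B₀ x) y : ℝ) ≠ 0)
    (hsym : LeftSymPoint 𝒯) : False := by
  set r : ℝ := ‖𝒯‖ with hr
  have hrpos : 0 < r := by
    rw [hr]
    exact (norm_pos_iff (a := 𝒯)).2 h𝒯
  set ψ : (H →L[ℝ] H) →L[ℝ] ℝ :=
    (innerSL ℝ y).comp ((ContinuousLinearMap.apply ℝ H x).comp 𝒯) with hψdef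
  have hψB : ∀ B, ψ B = (inner ℝ y (𝒯 B x) : ℝ) := fun B => rfl
  have hψ : ψ ≠ 0 := by
    intro h0
    apply hB₀
    rw [real_inner_comm, ← hψB, h0]
    rfl
  set k : ℝ := ‖ψ‖ with hk
  have hkpos : 0 < k := by
    rw [hk]
    exact (norm_pos_iff (a := ψ)).2 hψ
  set f : (H →L[ℝ] H) →L[ℝ] ℝ := k⁻¹ • ψ with hfdef
  have hψf : ∀ B, ψ B = k * f B := by
    intro B
    rw [hfdef]
    show ψ B = k * (k⁻¹ * ψ B)
    field_simp
  have hf : ‖f‖ = 1 := by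
    rw [hfdef, clm_norm_smul, norm_inv, Real.norm_eq_abs, abs_of_pos hkpos]
    exact inv_mul_cancel₀ (ne_of_gt hkpos)
  set C : H →L[ℝ] H := (innerSL ℝ x).smulRight y with hCdef
  have hCz : ∀ z : H, C z = (inner ℝ x z : ℝ) • y := fun z => rfl
  have hC : ‖C‖ = 1 := by
    rw [hCdef, ContinuousLinearMap.norm_smulRight_apply, innerSL_apply_norm, hx, hy, one_mul]
  set 𝒜 : (H →L[ℝ] H) →L[ℝ] (H →L[ℝ] H) := f.smulRight C with h𝒜def
  have h𝒜 : ‖𝒜‖ = 1 := by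
    rw [h𝒜def, ContinuousLinearMap.norm_smulRight_apply, hf, hC, one_mul]
  have hfA₁ : f A₁ = 0 := by
    have h1 : ψ A₁ = 0 := by
      rw [hψB, real_inner_comm]; exact hxy
    rw [hfdef]
    show k⁻¹ * ψ A₁ = 0
    rw [h1, mul_zero]
  have hT𝒜 : BJOrth 𝒯 𝒜 := by
    intro l
    have h1 : (𝒯 + l • 𝒜) A₁ = 𝒯 A₁ := by
      simp [h𝒜def, hfA₁]
    calc ‖𝒯‖ = ‖(𝒯 + l • 𝒜) A₁‖ := by rw [h1, h𝒯A₁]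
    _ ≤ ‖𝒯 + l • 𝒜‖ * ‖A₁‖ := ContinuousLinearMap.le_opNorm _ _
    _ = ‖𝒯 + l • 𝒜‖ := by rw [hA₁, mul_one]
  have h𝒜T := hsym 𝒜 hT𝒜
  obtain ⟨lam, hlampos, hlamk1, hlamr, hlamrk⟩ := aux_lam_exists k r hkpos hrpos
  have hlamk : 0 < lam * k := mul_pos hlampos hkpos
  have hkey : ‖𝒜 + (-lam) • 𝒯‖ ≤ Real.sqrt (1 - lam * k / 2) := by
    apply ContinuousLinearMap.opNorm_le_bound _ (Real.sqrt_nonneg _)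
    intro B
    have hEB : (𝒜 + (-lam) • 𝒯) B = (f B) • C - lam • (𝒯 B) := by
      simp [h𝒜def, sub_eq_add_neg, neg_smul]
    rw [hEB, mul_comm]
    apply ContinuousLinearMap.opNorm_le_bound _
      (by positivity : (0:ℝ) ≤ ‖B‖ * Real.sqrt (1 - lam * k / 2))
    intro z
    have happz : ((f B) • C - lam • (𝒯 B)) z
        = (f B * (inner ℝ x z : ℝ)) • y - lam • ((𝒯 B) z) := by
      have h2 : ((f B) • C - lam • (𝒯 B)) z = (f B) • (C z) - lam • ((𝒯 B) z) := rfl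
      rw [h2, hCz, smul_smul]
    rw [happz]
    have hDx : (inner ℝ y ((𝒯 B) x) : ℝ) = k * f B := by
      rw [← hψB]; exact hψf B
    have ht : |f B| ≤ ‖B‖ := by
      have h6 := f.le_opNorm B
      rwa [hf, one_mul, Real.norm_eq_abs] at h6
    exact aux_top_pointwise x y hx hy (𝒯 B) (f B) k lam r ‖B‖ (𝒯.le_opNorm B) hDx ht
      hrpos hkpos hlampos hlamk1 hlamr hlamrk z
  have hlt : Real.sqrt (1 - lam * k / 2) < 1 := by
    have h7 : 1 - lam * k / 2 < 1 := by linarith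
    calc Real.sqrt (1 - lam * k / 2) < Real.sqrt 1 := by
          apply Real.sqrt_lt_sqrt _ h7
          linarith
    _ = 1 := Real.sqrt_one
  have h8 := h𝒜T (-lam)
  rw [h𝒜] at h8
  linarith [le_trans h8 hkey]

end InnerFacts

theorem no_nonzero_leftSym_in_LLH {H : Type*} [NormedAddCommGroup H]
    [InnerProductSpace ℝ H] [FiniteDimensional ℝ H]
    (hdim : 2 ≤ Module.finrank ℝ H) :
    ∀ 𝒯 : (H →L[ℝ] H) →L[ℝ] (H →L[ℝ] H), LeftSymPoint 𝒯 → 𝒯 = 0 := by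
  intro 𝒯 hsym
  by_contra h𝒯
  have hntH : Nontrivial H := Module.nontrivial_of_finrank_pos (R := ℝ) (by omega)
  have hntW : Nontrivial (H →L[ℝ] H) := by
    obtain ⟨x0, hx0⟩ := exists_ne (0 : H)
    refine ⟨⟨ContinuousLinearMap.id ℝ H, 0, fun h => hx0 ?_⟩⟩
    have h1 := congrArg (fun S : H →L[ℝ] H => S x0) h
    simpa using h1
  obtain ⟨A₁, hA₁, h𝒯A₁⟩ := aux_norm_attain 𝒯
  by_cases hgood : ∃ x y : H, ‖x‖ = 1 ∧ ‖y‖ = 1 ∧ (inner ℝ (𝒯 A₁ x) y : ℝ) = 0 ∧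
      ∃ B : H →L[ℝ] H, (inner ℝ (𝒯 B x) y : ℝ) ≠ 0
  · obtain ⟨x, y, hx, hy, hxy, B₀, hB₀⟩ := hgood
    exact aux_top_good 𝒯 h𝒯 A₁ hA₁ h𝒯A₁ x y hx hy hxy B₀ hB₀ hsym
  · push_neg at hgood
    set V : H →L[ℝ] H := 𝒯 A₁ with hVdef
    have hV : V ≠ 0 := by
      intro h0
      apply h𝒯
      have h1 : ‖𝒯‖ = 0 := by rw [← h𝒯A₁, h0, norm_zero]
      ext B
      have h2 := 𝒯.le_opNorm B
      rw [h1, zero_mul] at h2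
      have h3 : 𝒯 B = 0 := norm_le_zero_iff.1 h2
      rw [h3]
      rfl
    have hprop : ∀ B : H →L[ℝ] H, ∃ c : ℝ, 𝒯 B = c • V := by
      intro B
      have hmem : ∀ xx : H, ∃ c : ℝ, (𝒯 B) xx = c • V xx := by
        intro xx
        rcases eq_or_ne xx 0 with rfl | hxx
        · exact ⟨0, by simp⟩
        · have hnxx : (0:ℝ) < ‖xx‖ := norm_pos_iff.2 hxx
          obtain ⟨xu, hxu, hxx2⟩ : ∃ xu : H, ‖xu‖ = 1 ∧ xx = ‖xx‖ • xu := by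
            refine ⟨‖xx‖⁻¹ • xx, ?_, ?_⟩
            · rw [norm_smul, norm_inv, norm_norm]
              exact inv_mul_cancel₀ (ne_of_gt hnxx)
            · rw [smul_smul, mul_inv_cancel₀ (ne_of_gt hnxx), one_smul]
          have hspan : (𝒯 B) xu ∈ Submodule.span ℝ {V xu} := by
            rw [← Submodule.orthogonal_orthogonal (Submodule.span ℝ {V xu})]
            rw [Submodule.mem_orthogonal]
            intro w hw
            have hVw : (inner ℝ (V xu) w : ℝ) = 0 :=
              Submodule.mem_orthogonal_singleton_iff_inner_right.1 hw
            rcases eq_or_ne w 0 with rfl | hw0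
            · exact inner_zero_left _
            · have hnw : (0:ℝ) < ‖w‖ := norm_pos_iff.2 hw0
              have hwu : ‖(‖w‖⁻¹ • w)‖ = 1 := by
                rw [norm_smul, norm_inv, norm_norm]
                exact inv_mul_cancel₀ (ne_of_gt hnw)
              have hVwu : (inner ℝ (V xu) (‖w‖⁻¹ • w) : ℝ) = 0 := by
                rw [real_inner_smul_right, hVw, mul_zero]
              have h1 := hgood xu (‖w‖⁻¹ • w) hxu hwu hVwu B
              rw [real_inner_smul_right] at h1
              have hwn : (‖w‖:ℝ)⁻¹ ≠ 0 := inv_ne_zero (ne_of_gt hnw)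
              have h2 : (inner ℝ ((𝒯 B) xu) w : ℝ) = 0 := by
                rcases mul_eq_zero.1 h1 with h | h
                · exact absurd h hwn
                · exact h
              rw [real_inner_comm]; exact h2
          obtain ⟨c, hc⟩ := Submodule.mem_span_singleton.1 hspan
          refine ⟨c, ?_⟩
          have e2 : (𝒯 B) (‖xx‖ • xu) = c • V (‖xx‖ • xu) := by
            rw [map_smul, map_smul, ← hc]
            rw [smul_comm]
          rw [← hxx2] at e2
          exact e2
      obtain ⟨c, hc⟩ := aux_span_scalar (𝒯 B) V hV hmem
      exact ⟨c, by ext xx; rw [hc xx]; rfl⟩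
    obtain ⟨z₀, hz₀⟩ : ∃ z₀ : H, V z₀ ≠ 0 := by
      by_contra hall
      push_neg at hall
      exact hV (by ext xx; simp [hall xx])
    set γ : (H →L[ℝ] H) →L[ℝ] ℝ := (‖V z₀‖^2)⁻¹ •
      ((innerSL ℝ (V z₀)).comp ((ContinuousLinearMap.apply ℝ H z₀).comp 𝒯)) with hγdef
    have hγB : ∀ B : H →L[ℝ] H, 𝒯 B = γ B • V := by
      intro B
      obtain ⟨c, hc⟩ := hprop B
      have h3 : γ B = c := by
        have h4 : γ B = (‖V z₀‖^2)⁻¹ * (inner ℝ (V z₀) ((𝒯 B) z₀) : ℝ) := rfl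
        rw [h4, hc, ContinuousLinearMap.smul_apply, real_inner_smul_right,
          real_inner_self_eq_norm_sq]
        have hvne : ‖V z₀‖^2 ≠ 0 := pow_ne_zero _ (norm_ne_zero_iff.2 hz₀)
        field_simp
      rw [h3, hc]
    have h𝒯sm : 𝒯 = γ.smulRight V := by
      refine ContinuousLinearMap.ext fun B => ?_
      exact hγB B
    have hγ0 : γ ≠ 0 := by
      intro h0
      apply h𝒯
      refine ContinuousLinearMap.ext fun B => ?_
      have h1 := hγB B
      rw [h0] at h1
      simpa using h1
    have hγpos : 0 < ‖γ‖ := (norm_pos_iff (a := γ)).2 hγ0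
    have hVsym : LeftSymPoint V := by
      intro u hVu
      have horth : BJOrth 𝒯 (γ.smulRight u) := by
        intro m
        have he : 𝒯 + m • γ.smulRight u = γ.smulRight (V + m • u) := by
          refine ContinuousLinearMap.ext fun B => ?_
          show 𝒯 B + m • (γ B • u) = γ B • (V + m • u)
          rw [hγB B]
          module
        rw [he, h𝒯sm, ContinuousLinearMap.norm_smulRight_apply,
          ContinuousLinearMap.norm_smulRight_apply]
        exact mul_le_mul_of_nonneg_left (hVu m) (norm_nonneg γ)
      intro l
      have h2 := hsym _ horth l
      have he2 : γ.smulRight u + l • 𝒯 = γ.smulRight (u + l • V) := by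
        refine ContinuousLinearMap.ext fun B => ?_
        show γ B • u + l • (𝒯 B) = γ B • (u + l • V)
        rw [hγB B]
        module
      rw [he2, ContinuousLinearMap.norm_smulRight_apply,
        ContinuousLinearMap.norm_smulRight_apply] at h2
      exact le_of_mul_le_mul_left h2 hγpos
    exact hV (aux_gsp hdim V hVsym)
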